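/- arXiv:1102.4898 — 11 statements merged into one kernel-verified Lean document; each statement's English description precedes it below -/
import Mathlib

section
/- If perfect state transfer occurs from u to v at time τ, then X is periodic at u and at v with period dividing 2τ; that is, |H(2τ)_{u,u}| = 1 and |H(2τ)_{v,v}| = 1. -/
open Matrix Complex

/-- The transition matrix `H(t) = exp(itA)` of a continuous quantum walk on a graph. -/
noncomputable def transitionMatrix {V : Type*} [Fintype V] [DecidableEq V]
    (G : SimpleGraph V) [DecidableRel G.Adj] (t : ℝ) : Matrix V V ℂ :=
  NormedSpace.exp ((Complex.I * t) • G.adjMatrix ℂ)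

lemma transitionMatrix_symm {V : Type*} [Fintype V] [DecidableEq V]
    (G : SimpleGraph V) [DecidableRel G.Adj] (t : ℝ) :
    (transitionMatrix G t)ᵀ = transitionMatrix G t := by
  rw [transitionMatrix, ← Matrix.exp_transpose, Matrix.transpose_smul,
    SimpleGraph.transpose_adjMatrix]

lemma transitionMatrix_double {V : Type*} [Fintype V] [DecidableEq V]
    (G : SimpleGraph V) [DecidableRel G.Adj] (τ : ℝ) :
    transitionMatrix G (2 * τ) = transitionMatrix G τ * transitionMatrix G τ := by
  have key : ((Complex.I * ((2*τ:ℝ):ℂ))) • G.adjMatrix ℂ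
      = (Complex.I * (τ:ℝ)) • G.adjMatrix ℂ + (Complex.I * (τ:ℝ)) • G.adjMatrix ℂ := by
    rw [← add_smul]; congr 1; push_cast; ring
  have hexp := Matrix.exp_add_of_commute ((Complex.I * (τ:ℝ)) • G.adjMatrix ℂ)
    ((Complex.I * (τ:ℝ)) • G.adjMatrix ℂ) (Commute.refl _)
  rw [transitionMatrix, key, hexp]
  rfl

lemma transitionMatrix_unitary {V : Type*} [Fintype V] [DecidableEq V]
    (G : SimpleGraph V) [DecidableRel G.Adj] (τ : ℝ) :
    star (transitionMatrix G τ) * transitionMatrix G τ = 1 := by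
  have hstarA : star (G.adjMatrix ℂ) = G.adjMatrix ℂ := by
    ext i j
    simp [Matrix.star_apply, SimpleGraph.adjMatrix_apply, apply_ite (star : ℂ → ℂ),
      G.adj_comm i j]
  have h1 : star (transitionMatrix G τ)
      = NormedSpace.exp (-((Complex.I * (τ:ℝ)) • G.adjMatrix ℂ)) := by
    rw [transitionMatrix, Matrix.star_eq_conjTranspose, ← Matrix.exp_conjTranspose]
    congr 1
    rw [← Matrix.star_eq_conjTranspose, star_smul, hstarA, ← neg_smul]
    congr 1
    simp [Complex.conj_ofReal]
  have hexp := Matrix.exp_add_of_commute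
    (-((Complex.I * (τ:ℝ)) • G.adjMatrix ℂ)) ((Complex.I * (τ:ℝ)) • G.adjMatrix ℂ)
    ((Commute.refl _).neg_left)
  rw [h1, transitionMatrix, ← hexp, neg_add_cancel]
  simp

/-- If perfect state transfer occurs from `u` to `v` at time `τ` (meaning
`H(τ) e_u = γ e_v` with `|γ| = 1`), then `X` is periodic at `u` and at `v`
with period dividing `2τ`: `|H(2τ)_{u,u}| = 1` and `|H(2τ)_{v,v}| = 1`. -/
theorem pst_implies_periodic {V : Type*} [Fintype V] [DecidableEq V]
    (G : SimpleGraph V) [DecidableRel G.Adj] (u v : V) (τ : ℝ) (γ : ℂ)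
    (hγ : ‖γ‖ = 1)
    (hpst : transitionMatrix G τ *ᵥ Pi.single u 1 = γ • (Pi.single v 1 : V → ℂ)) :
    ‖transitionMatrix G (2 * τ) u u‖ = 1 ∧
      ‖transitionMatrix G (2 * τ) v v‖ = 1 := by
  set M := transitionMatrix G τ with hM
  -- column u of M
  have hcolu : ∀ w, M w u = γ * (Pi.single v 1 : V → ℂ) w := by
    intro w
    have := congrFun hpst w
    simpa [Matrix.mulVec_single] using this
  -- symmetry of M
  have hsym : ∀ a b, M a b = M b a := by
    intro a b
    exact (congrFun (congrFun (transitionMatrix_symm G τ) a) b).symm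
  -- γ * conj γ = 1
  have hγc : γ * star γ = 1 := by
    simp [Complex.star_def, Complex.mul_conj, Complex.normSq_eq_norm_sq, hγ]
  -- row v of M, using unitarity
  have hrowv : ∀ w, M v w = if w = u then γ else 0 := by
    intro w
    have hu := transitionMatrix_unitary G τ
    have he : (star M * M) w u = (1 : Matrix V V ℂ) w u := by rw [hu]
    rw [Matrix.mul_apply] at he
    simp only [Matrix.star_apply, hcolu, Matrix.one_apply] at he
    rw [Finset.sum_eq_single v (by intro b _ hb; simp [Pi.single_eq_of_ne hb])
      (by simp)] at he
    simp only [Pi.single_eq_same, mul_one] at he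
    have := congrArg (fun z => γ * star z) he
    simp only [star_mul', star_star] at this
    rw [mul_comm (M v w) (star γ), ← mul_assoc, hγc, one_mul] at this
    rw [this]
    split <;> simp [hγc]
  rw [transitionMatrix_double, ← hM]
  constructor
  · rw [Matrix.mul_apply]
    rw [Finset.sum_eq_single v (by intro b _ hb; simp [hcolu, Pi.single_eq_of_ne hb])
      (by simp)]
    rw [hcolu, Pi.single_eq_same, mul_one, hsym u v, hrowv u]
    simp [hγ]
  · rw [Matrix.mul_apply]
    rw [Finset.sum_eq_single u (by intro b _ hb; rw [hsym b v, hrowv b, if_neg hb, mul_zero])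
      (by simp)]
    rw [hrowv u, if_pos rfl, hsym u v, hrowv u, if_pos rfl]
    simp [hγ]
end

section
/- Let A be a real symmetric matrix with spectral decomposition A = Σ_r θ_r E_r (with E_r the orthogonal projections onto the distinct eigenspaces). Then there is perfect state transfer from u to v at time τ if and only if there is a complex number γ of norm 1 such that E_r e_u = γ exp(−iτθ_r) E_r e_v for all r. -/
open Matrix Complex

theorem sum_mulVec_aux {V : Type*} [Fintype V] {ι : Type*} (s : Finset ι)
    (A : ι → Matrix V V ℂ) (x : V → ℂ) :
    (∑ r ∈ s, A r) *ᵥ x = ∑ r ∈ s, A r *ᵥ x := by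
  ext i
  simp only [Matrix.mulVec, dotProduct, Matrix.sum_apply, Finset.sum_mul, Finset.sum_apply]
  rw [Finset.sum_comm]

theorem exp_spectral_aux {V : Type*} [Fintype V] [DecidableEq V] {m : ℕ}
    (F : Fin m → Matrix V V ℂ) (c : Fin m → ℂ)
    (hidem : ∀ r, F r * F r = F r)
    (horth : ∀ r s, r ≠ s → F r * F s = 0)
    (hsum : ∑ r, F r = 1) :
    NormedSpace.exp (∑ r, c r • F r) = ∑ r, Complex.exp (c r) • F r := by
  letI : NormedRing (Matrix V V ℂ) := Matrix.linftyOpNormedRing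
  letI : NormedAlgebra ℂ (Matrix V V ℂ) := Matrix.linftyOpNormedAlgebra
  have hpow : ∀ n : ℕ, (∑ r, c r • F r) ^ n = ∑ r, (c r ^ n) • F r := by
    intro n
    induction n with
    | zero => simp [hsum]
    | succ n ih =>
      rw [pow_succ, ih, Finset.sum_mul_sum]
      simp_rw [smul_mul_assoc, mul_smul_comm, smul_smul]
      refine Finset.sum_congr rfl fun r _ => ?_
      rw [Finset.sum_eq_single r]
      · rw [hidem r, ← pow_succ]
      · intro s _ hs
        rw [horth r s (Ne.symm hs), smul_zero]
      · intro h; exact absurd (Finset.mem_univ r) h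
  rw [NormedSpace.exp_eq_tsum (𝕂 := ℂ)]
  simp only [hpow, Finset.smul_sum, smul_smul]
  have hsummable : ∀ r : Fin m,
      Summable fun n : ℕ => (((n.factorial : ℂ))⁻¹ * c r ^ n) • F r := by
    intro r
    have := (NormedSpace.expSeries_summable' (𝕂 := ℂ) (c r)).smul_const (F r)
    simpa [smul_eq_mul] using this
  rw [Summable.tsum_finsetSum fun r _ => hsummable r]
  refine Finset.sum_congr rfl fun r _ => ?_
  have h1 : Summable fun n : ℕ => ((n.factorial : ℂ))⁻¹ * c r ^ n := by
    simpa [smul_eq_mul] using (NormedSpace.expSeries_summable' (𝕂 := ℂ) (c r))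
  rw [Summable.tsum_smul_const h1]
  congr 1
  rw [Complex.exp_eq_exp_ℂ, NormedSpace.exp_eq_tsum (𝕂 := ℂ)]
  simp [smul_eq_mul]

/-- Spectral characterization of perfect state transfer: with `A = Σ_r θ_r E_r` the spectral
decomposition of the adjacency matrix, there is perfect state transfer from `u` to `v` at
time `τ` iff there is a norm-one `γ` with `E_r e_u = γ exp(-iτθ_r) E_r e_v` for all `r`. -/
theorem pst_iff_projections {V : Type*} [Fintype V] [DecidableEq V]
    (G : SimpleGraph V) [DecidableRel G.Adj]
    {m : ℕ} (θ : Fin m → ℝ) (E : Fin m → Matrix V V ℝ)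
    (hθ : Function.Injective θ)
    (hsym : ∀ r, (E r)ᵀ = E r)
    (hidem : ∀ r, E r * E r = E r)
    (horth : ∀ r s, r ≠ s → E r * E s = 0)
    (hsum : ∑ r, E r = 1)
    (hdecomp : G.adjMatrix ℝ = ∑ r, θ r • E r)
    (u v : V) (τ : ℝ) :
    (∃ γ : ℂ, ‖γ‖ = 1 ∧
        NormedSpace.exp ((Complex.I * τ) • G.adjMatrix ℂ) *ᵥ Pi.single u 1
          = γ • (Pi.single v 1 : V → ℂ)) ↔
    (∃ γ : ℂ, ‖γ‖ = 1 ∧ ∀ r,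
        (E r).map Complex.ofReal *ᵥ Pi.single u 1
          = (γ * Complex.exp (-(Complex.I * τ * θ r))) •
              ((E r).map Complex.ofReal *ᵥ Pi.single v 1)) := by
  set F : Fin m → Matrix V V ℂ := fun r => (E r).map Complex.ofReal with hF
  set c : Fin m → ℂ := fun r => Complex.I * τ * θ r with hc
  have hFidem : ∀ r, F r * F r = F r := by
    intro r
    ext i j
    have h := congrArg (fun M : Matrix V V ℝ => M i j) (hidem r)
    simp only [Matrix.mul_apply] at h
    simp only [hF, Matrix.mul_apply, Matrix.map_apply]
    rw [← h]
    push_cast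
    rfl
  have hForth : ∀ r s, r ≠ s → F r * F s = 0 := by
    intro r s hrs
    ext i j
    have h := congrArg (fun M : Matrix V V ℝ => M i j) (horth r s hrs)
    simp only [Matrix.mul_apply, Matrix.zero_apply] at h
    simp only [hF, Matrix.mul_apply, Matrix.map_apply, Matrix.zero_apply]
    have : ((∑ k, E r i k * E s k j : ℝ) : ℂ) = 0 := by rw [h]; simp
    rw [← this]
    push_cast
    rfl
  have hFsum : ∑ r, F r = 1 := by
    ext i j
    have h := congrArg (fun M : Matrix V V ℝ => M i j) hsum
    simp only [Matrix.sum_apply, Matrix.one_apply] at h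
    simp only [hF, Matrix.sum_apply, Matrix.map_apply, Matrix.one_apply]
    rw [← Complex.ofReal_sum, h]
    split <;> simp
  have hA : (Complex.I * τ) • G.adjMatrix ℂ = ∑ r, c r • F r := by
    have hA0 : G.adjMatrix ℂ = ∑ r, (θ r : ℂ) • F r := by
      ext i j
      have h := congrArg (fun M : Matrix V V ℝ => M i j) hdecomp
      simp only [Matrix.sum_apply, Matrix.smul_apply, SimpleGraph.adjMatrix_apply,
        smul_eq_mul] at h
      simp only [Matrix.sum_apply, Matrix.smul_apply, SimpleGraph.adjMatrix_apply, hF,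
        Matrix.map_apply, smul_eq_mul]
      have : ((∑ r, θ r * E r i j : ℝ) : ℂ) = ∑ r, (θ r : ℂ) * ((E r i j : ℝ) : ℂ) := by
        push_cast; rfl
      rw [← this, ← h]
      split <;> simp
    rw [hA0, Finset.smul_sum]
    exact Finset.sum_congr rfl fun r _ => by rw [smul_smul]
  have hexp : NormedSpace.exp ((Complex.I * τ) • G.adjMatrix ℂ)
      = ∑ r, Complex.exp (c r) • F r := by
    rw [hA]; exact exp_spectral_aux F c hFidem hForth hFsum
  have hexpne : ∀ r, Complex.exp (c r) ≠ 0 := fun r => Complex.exp_ne_zero _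
  constructor
  · rintro ⟨γ, hγ, h⟩
    refine ⟨γ, hγ, fun r => ?_⟩
    rw [hexp] at h
    have h2 := congrArg (fun w => F r *ᵥ w) h
    rw [Matrix.mulVec_mulVec, Matrix.mul_sum] at h2
    have h3 : F r * ∑ s, Complex.exp (c s) • F s = Complex.exp (c r) • F r := by
      rw [Matrix.mul_sum]
      rw [Finset.sum_eq_single r]
      · rw [mul_smul_comm, hFidem r]
      · intro s _ hs
        rw [mul_smul_comm, hForth r s (Ne.symm hs), smul_zero]
      · intro h'; exact absurd (Finset.mem_univ r) h'
    rw [← Matrix.mul_sum, h3] at h2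
    rw [Matrix.smul_mulVec, Matrix.mulVec_smul] at h2
    have h4 := congrArg (fun w => Complex.exp (-(c r)) • w) h2
    simp only [smul_smul] at h4
    rw [← Complex.exp_add, neg_add_cancel, Complex.exp_zero, one_smul] at h4
    rw [h4, mul_comm (Complex.exp (-(c r))) γ]
  · rintro ⟨γ, hγ, h⟩
    refine ⟨γ, hγ, ?_⟩
    rw [hexp, sum_mulVec_aux]
    have : ∀ r : Fin m, (Complex.exp (c r) • F r) *ᵥ Pi.single u 1
        = γ • (F r *ᵥ (Pi.single v 1 : V → ℂ)) := by
      intro r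
      rw [Matrix.smul_mulVec]
      simp only [hF, hc]
      rw [h r, smul_smul, mul_comm (Complex.exp (Complex.I * τ * θ r)), mul_assoc,
        ← Complex.exp_add, neg_add_cancel, Complex.exp_zero, mul_one]
    simp_rw [this]
    rw [← Finset.smul_sum, ← sum_mulVec_aux, hFsum, Matrix.one_mulVec]
end

section
/- If there is perfect state transfer from u to v at time τ, then for each spectral idempotent E_r of the adjacency matrix, E_r e_u = ± E_r e_v. In particular u and v have the same eigenvalue support (the set of eigenvalues θ_r with E_r e_u ≠ 0 equals the set with E_r e_v ≠ 0). -/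
open Matrix Complex

/-- If `P * X = a • P`, then `P * exp X = (exp a) • P`. -/
lemma mul_exp_of_mul_eq_smul {n : Type*} [Fintype n] [DecidableEq n]
    (P X : Matrix n n ℂ) (a : ℂ) (h : P * X = a • P) :
    P * NormedSpace.exp X = Complex.exp a • P := by
  letI : SeminormedRing (Matrix n n ℂ) := Matrix.linftyOpSemiNormedRing
  letI : NormedRing (Matrix n n ℂ) := Matrix.linftyOpNormedRing
  letI : NormedAlgebra ℂ (Matrix n n ℂ) := Matrix.linftyOpNormedAlgebra
  have hpow : ∀ k : ℕ, P * X ^ k = a ^ k • P := by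
    intro k
    induction k with
    | zero => simp
    | succ k ih =>
        rw [pow_succ, ← mul_assoc, ih, smul_mul_assoc, h, smul_smul, pow_succ]
  have hsummX : Summable fun k : ℕ => ((Nat.factorial k : ℂ))⁻¹ • X ^ k :=
    NormedSpace.expSeries_summable' (𝕂 := ℂ) X
  have hsumma : Summable fun k : ℕ => ((Nat.factorial k : ℂ))⁻¹ * a ^ k := by
    simpa [smul_eq_mul] using NormedSpace.expSeries_summable' (𝕂 := ℂ) a
  rw [NormedSpace.exp_eq_tsum ℂ]
  rw [← hsummX.tsum_mul_left P]
  have : ∀ k : ℕ, P * (((Nat.factorial k : ℂ))⁻¹ • X ^ k) = (((Nat.factorial k : ℂ))⁻¹ * a ^ k) • P := by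
    intro k
    rw [mul_smul_comm, hpow k, smul_smul]
  rw [tsum_congr this, hsumma.tsum_smul_const]
  congr 1
  have := congrFun Complex.exp_eq_exp_ℂ a
  rw [this, NormedSpace.exp_eq_tsum ℂ]
  exact tsum_congr fun k => by rw [smul_eq_mul]

/-- If there is perfect state transfer from `u` to `v` at time `τ`, then for each spectral
idempotent `E_r` of the adjacency matrix we have `E_r e_u = ± E_r e_v`; in particular `u`
and `v` have the same eigenvalue support. -/
theorem pst_projections_pm {V : Type*} [Fintype V] [DecidableEq V]
    (G : SimpleGraph V) [DecidableRel G.Adj]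
    {m : ℕ} (θ : Fin m → ℝ) (E : Fin m → Matrix V V ℝ)
    (hθ : Function.Injective θ)
    (hsym : ∀ r, (E r)ᵀ = E r)
    (hidem : ∀ r, E r * E r = E r)
    (horth : ∀ r s, r ≠ s → E r * E s = 0)
    (hsum : ∑ r, E r = 1)
    (hdecomp : G.adjMatrix ℝ = ∑ r, θ r • E r)
    (u v : V) (τ : ℝ) (γ : ℂ) (hγ : ‖γ‖ = 1)
    (hpst : NormedSpace.exp ((Complex.I * τ) • G.adjMatrix ℂ) *ᵥ Pi.single u 1
      = γ • (Pi.single v 1 : V → ℂ)) :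
    (∀ r, E r *ᵥ Pi.single u 1 = E r *ᵥ Pi.single v 1 ∨
        E r *ᵥ Pi.single u 1 = -(E r *ᵥ Pi.single v 1)) ∧
    {x : ℝ | ∃ r, θ r = x ∧ E r *ᵥ Pi.single u 1 ≠ 0}
      = {x : ℝ | ∃ r, θ r = x ∧ E r *ᵥ Pi.single v 1 ≠ 0} := by
  -- complexify the idempotents
  set f : ℝ →+* ℂ := algebraMap ℝ ℂ with hf
  set F : Fin m → Matrix V V ℂ := fun r => (E r).map f with hF
  -- complexified adjacency decomposition
  have hAc : G.adjMatrix ℂ = ∑ r, (θ r : ℂ) • F r := by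
    have := congrArg (fun M : Matrix V V ℝ => M.map f) hdecomp
    have hmap : (G.adjMatrix ℝ).map f = G.adjMatrix ℂ := by
      ext w z
      simp only [Matrix.map_apply, SimpleGraph.adjMatrix_apply, hf]
      split_ifs <;> simp
    rw [hmap] at this
    rw [this]
    ext w z
    simp [Matrix.map_apply, Matrix.sum_apply, hF, hf]
  have hFmul : ∀ r s, F r * F s = ((E r * E s).map f) := by
    intro r s
    rw [hF]
    exact (Matrix.map_mul).symm
  -- key: for each r, F r * (adjacency) = θ r • F r
  have hkey : ∀ s : Fin m, F s * ((Complex.I * τ) • G.adjMatrix ℂ)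
      = (Complex.I * τ * θ s) • F s := by
    intro s
    rw [mul_smul_comm, hAc, Finset.mul_sum]
    have : ∀ r : Fin m, F s * ((θ r : ℂ) • F r) = if r = s then (θ s : ℂ) • F s else 0 := by
      intro r
      rcases eq_or_ne r s with rfl | hrs
      · rw [if_pos rfl, mul_smul_comm, hFmul, hidem]
      · rw [if_neg hrs, mul_smul_comm, hFmul, horth s r (Ne.symm hrs)]
        simp
    rw [Finset.sum_congr rfl fun r _ => this r, Finset.sum_ite_eq' Finset.univ s
      (fun _ => (θ s : ℂ) • F s), if_pos (Finset.mem_univ s), smul_smul]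
  -- apply each F s to the PST equation
  have hmain : ∀ s : Fin m, ∀ w : V,
      Complex.exp (Complex.I * τ * θ s) * ((E s) w u : ℂ) = γ * ((E s) w v : ℂ) := by
    intro s w
    have h1 := congrArg (fun x => F s *ᵥ x) hpst
    rw [Matrix.mulVec_mulVec, mul_exp_of_mul_eq_smul _ _ _ (hkey s),
      Matrix.smul_mulVec, Matrix.mulVec_smul] at h1
    have h2 := congrFun h1 w
    simp only [Pi.smul_apply, Matrix.mulVec_single, mul_one, smul_eq_mul] at h2
    simpa [hF, hf, Matrix.map_apply] using h2
  -- the exponential factor has modulus one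
  have habs : ∀ s : Fin m, ‖Complex.exp (Complex.I * τ * θ s)‖ = 1 := by
    intro s
    rw [Complex.norm_exp]
    have : (Complex.I * τ * θ s).re = 0 := by simp [Complex.mul_re]
    rw [this, Real.exp_zero]
  -- part 1
  have part1 : ∀ r, E r *ᵥ Pi.single u 1 = E r *ᵥ Pi.single v 1 ∨
      E r *ᵥ Pi.single u 1 = -(E r *ᵥ Pi.single v 1) := by
    intro s
    have hexp_ne : Complex.exp (Complex.I * τ * θ s) ≠ 0 := Complex.exp_ne_zero _
    by_cases hy : ∀ w, (E s) w v = 0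
    · left
      ext w
      have h := hmain s w
      rw [hy w] at h
      simp only [Complex.ofReal_zero, mul_zero] at h
      have hx0 : ((E s) w u : ℂ) = 0 := by
        rcases mul_eq_zero.mp h with h' | h'
        · exact absurd h' hexp_ne
        · exact h'
      have : (E s) w u = 0 := by exact_mod_cast hx0
      simp [Matrix.mulVec_single, this, hy w]
    · push_neg at hy
      obtain ⟨w0, hw0⟩ := hy
      -- the ratio is real of absolute value one
      set c : ℂ := γ / Complex.exp (Complex.I * τ * θ s) with hc
      have hcy : ∀ w, ((E s) w u : ℂ) = c * ((E s) w v : ℂ) := by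
        intro w
        have h := hmain s w
        rw [hc, div_mul_eq_mul_div, eq_div_iff hexp_ne]
        linear_combination h
      have hcabs : ‖c‖ = 1 := by
        rw [hc, norm_div, hγ, habs s, div_one]
      set d : ℝ := (E s) w0 u / (E s) w0 v with hd
      have hcd : c = (d : ℂ) := by
        have hv : ((E s) w0 v : ℂ) ≠ 0 := by exact_mod_cast hw0
        rw [hd, Complex.ofReal_div, eq_div_iff hv]
        exact (hcy w0).symm
      have hdabs : |d| = 1 := by
        have := hcabs
        rw [hcd, Complex.norm_real, Real.norm_eq_abs] at this
        exact this
      have hreal : ∀ w, (E s) w u = d * (E s) w v := by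
        intro w
        have h := hcy w
        rw [hcd, ← Complex.ofReal_mul] at h
        exact_mod_cast h
      rcases (abs_eq (by norm_num : (0:ℝ) ≤ 1)).mp hdabs with hd1 | hd1
      · left
        ext w
        simp [Matrix.mulVec_single, hreal w, hd1]
      · right
        ext w
        simp [Matrix.mulVec_single, hreal w, hd1]
  refine ⟨part1, ?_⟩
  ext x
  simp only [Set.mem_setOf_eq]
  constructor
  · rintro ⟨r, rfl, h⟩
    refine ⟨r, rfl, ?_⟩
    rcases part1 r with h' | h'
    · rw [h'] at h; exact h
    · intro h0; rw [h', h0, neg_zero] at h; exact h rfl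
  · rintro ⟨r, rfl, h⟩
    refine ⟨r, rfl, ?_⟩
    rcases part1 r with h' | h'
    · rw [h']; exact h
    · rw [h']; simpa using h
end

section
/- Let X be a connected graph and u a vertex. The set T of times t ∈ ℝ such that H(t)e_u is a scalar multiple of e_u is an additive subgroup of ℝ. -/
open Matrix Complex

lemma transitionMatrix_add {V : Type*} [Fintype V] [DecidableEq V]
    (G : SimpleGraph V) [DecidableRel G.Adj] (s t : ℝ) :
    transitionMatrix G (s + t) = transitionMatrix G s * transitionMatrix G t := by
  unfold transitionMatrix
  rw [← Matrix.exp_add_of_commute]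
  · congr 1
    push_cast
    rw [← add_smul]
    ring_nf
  · exact (Commute.refl _).smul_left _ |>.smul_right _

lemma transitionMatrix_zero {V : Type*} [Fintype V] [DecidableEq V]
    (G : SimpleGraph V) [DecidableRel G.Adj] :
    transitionMatrix G 0 = 1 := by
  unfold transitionMatrix
  norm_num

lemma transitionMatrix_neg_mul {V : Type*} [Fintype V] [DecidableEq V]
    (G : SimpleGraph V) [DecidableRel G.Adj] (t : ℝ) :
    transitionMatrix G (-t) * transitionMatrix G t = 1 := by
  rw [← transitionMatrix_add, neg_add_cancel, transitionMatrix_zero]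

/-- For a connected graph `X` and a vertex `u`, the set of times `t` such that `H(t)e_u`
is a scalar multiple of `e_u` is an additive subgroup of `ℝ`. -/
theorem periods_addSubgroup {V : Type*} [Fintype V] [DecidableEq V]
    (G : SimpleGraph V) [DecidableRel G.Adj] (hconn : G.Connected) (u : V) :
    ∃ T : AddSubgroup ℝ, (T : Set ℝ) =
      {t : ℝ | ∃ c : ℂ, transitionMatrix G t *ᵥ Pi.single u 1
        = c • (Pi.single u 1 : V → ℂ)} := by
  refine ⟨{ carrier := {t : ℝ | ∃ c : ℂ, transitionMatrix G t *ᵥ Pi.single u 1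
        = c • (Pi.single u 1 : V → ℂ)}
            zero_mem' := ?_
            add_mem' := ?_
            neg_mem' := ?_ }, rfl⟩
  · rintro s t ⟨c, hc⟩ ⟨d, hd⟩
    refine ⟨c * d, ?_⟩
    rw [transitionMatrix_add, ← Matrix.mulVec_mulVec, hd, Matrix.mulVec_smul, hc,
      smul_smul, mul_comm]
  · exact ⟨1, by rw [transitionMatrix_zero, Matrix.one_mulVec, one_smul]⟩
  · rintro t ⟨c, hc⟩
    have hc0 : c ≠ 0 := by
      rintro rfl
      have h1 : transitionMatrix G (-t) *ᵥ (transitionMatrix G t *ᵥ Pi.single u 1)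
          = (Pi.single u 1 : V → ℂ) := by
        rw [Matrix.mulVec_mulVec, transitionMatrix_neg_mul, Matrix.one_mulVec]
      rw [hc] at h1
      simp only [zero_smul, Matrix.mulVec_zero] at h1
      have := congrFun h1 u
      simp at this
    refine ⟨c⁻¹, ?_⟩
    have h1 : transitionMatrix G (-t) *ᵥ (transitionMatrix G t *ᵥ Pi.single u 1)
        = (Pi.single u 1 : V → ℂ) := by
      rw [Matrix.mulVec_mulVec, transitionMatrix_neg_mul, Matrix.one_mulVec]
    rw [hc, Matrix.mulVec_smul] at h1
    calc transitionMatrix G (-t) *ᵥ Pi.single u 1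
        = c⁻¹ • (c • (transitionMatrix G (-t) *ᵥ Pi.single u 1)) := by
          rw [smul_smul, inv_mul_cancel₀ hc0, one_smul]
      _ = c⁻¹ • (Pi.single u 1 : V → ℂ) := by rw [h1]
end

section
/- Let A be a real symmetric matrix with largest eigenvalue θ_1 and smallest eigenvalue θ_m, and let x be a unit vector. If x^T exp(itA) x = 0 for some t > 0, then t ≥ π/(θ_1 − θ_m). -/
open Matrix Complex Real

/-- Key analytic lemma: if a convex-type combination of points `e^{itθ_j}` vanishes,
then `t` cannot be smaller than `π / (sup θ - inf θ)`. -/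
lemma aux_min_time {n : ℕ} [NeZero n] (θ y : Fin n → ℝ) (t : ℝ) (ht : 0 < t)
    (hy : ∑ j, y j ^ 2 = 1)
    (h0 : ∑ j, Complex.exp (Complex.I * t * θ j) * ((y j : ℂ)) ^ 2 = 0) :
    t ≥ π / (Finset.univ.sup' Finset.univ_nonempty θ
        - Finset.univ.inf' Finset.univ_nonempty θ) := by
  set b := Finset.univ.sup' Finset.univ_nonempty θ with hb
  set a := Finset.univ.inf' Finset.univ_nonempty θ with ha
  have hja : ∀ j, a ≤ θ j := fun j => Finset.inf'_le _ (Finset.mem_univ j)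
  have hjb : ∀ j, θ j ≤ b := fun j => Finset.le_sup' _ (Finset.mem_univ j)
  obtain ⟨j0⟩ := (inferInstance : Nonempty (Fin n))
  have hab : a ≤ b := le_trans (hja j0) (hjb j0)
  by_cases hba : b - a ≤ 0
  · have : π / (b - a) ≤ 0 := div_nonpos_of_nonneg_of_nonpos Real.pi_pos.le hba
    linarith
  push_neg at hba
  by_contra h
  push_neg at h
  have htba : t * (b - a) < π := (lt_div_iff₀ hba).mp h
  set φ := t * (a + b) / 2 with hφ
  have hcos : ∀ j, 0 < Real.cos (t * θ j - φ) := by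
    intro j
    apply Real.cos_pos_of_mem_Ioo
    constructor
    · have h1 : t * a ≤ t * θ j := mul_le_mul_of_nonneg_left (hja j) ht.le
      simp only [hφ]
      nlinarith
    · have h2 : t * θ j ≤ t * b := mul_le_mul_of_nonneg_left (hjb j) ht.le
      simp only [hφ]
      nlinarith
  have h2 : ∑ j, Complex.exp ((↑(t * θ j - φ)) * Complex.I) * ((y j : ℂ)) ^ 2 = 0 := by
    have : ∑ j, Complex.exp ((↑(t * θ j - φ)) * Complex.I) * ((y j : ℂ)) ^ 2
        = Complex.exp (-(φ : ℂ) * Complex.I)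
          * ∑ j, Complex.exp (Complex.I * t * θ j) * ((y j : ℂ)) ^ 2 := by
      rw [Finset.mul_sum]
      refine Finset.sum_congr rfl fun j _ => ?_
      rw [← mul_assoc, ← Complex.exp_add]
      congr 1
      push_cast
      ring
    rw [this, h0, mul_zero]
  have h3 : ∑ j, Real.cos (t * θ j - φ) * y j ^ 2 = 0 := by
    have := congrArg Complex.re h2
    rw [Complex.re_sum, Complex.zero_re] at this
    rw [← this]
    refine Finset.sum_congr rfl fun j _ => ?_
    have : ((y j : ℂ)) ^ 2 = ((y j ^ 2 : ℝ) : ℂ) := by push_cast; ring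
    rw [this, Complex.mul_re, Complex.exp_ofReal_mul_I_re, Complex.ofReal_re,
      Complex.ofReal_im, mul_zero, sub_zero]
  have hterm : ∀ j ∈ Finset.univ, (0:ℝ) ≤ Real.cos (t * θ j - φ) * y j ^ 2 :=
    fun j _ => mul_nonneg (hcos j).le (sq_nonneg _)
  have hzero : ∀ j ∈ Finset.univ, Real.cos (t * θ j - φ) * y j ^ 2 = 0 :=
    (Finset.sum_eq_zero_iff_of_nonneg hterm).mp h3
  have hy0 : ∀ j, y j ^ 2 = 0 := by
    intro j
    have := hzero j (Finset.mem_univ j)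
    rcases mul_eq_zero.mp this with h' | h'
    · exact absurd h' (hcos j).ne'
    · exact h'
  rw [Finset.sum_congr rfl fun j _ => hy0 j] at hy
  simp at hy

/-- If `A` is a real symmetric matrix with largest eigenvalue `θ₁` and smallest eigenvalue
`θ_m`, `x` is a unit vector, and `xᵀ exp(itA) x = 0` for some `t > 0`, then
`t ≥ π / (θ₁ − θ_m)`. -/
theorem min_time_zero_overlap {n : ℕ} [NeZero n]
    (A : Matrix (Fin n) (Fin n) ℝ) (hA : A.IsHermitian)
    (x : Fin n → ℝ) (hx : ∑ i, x i ^ 2 = 1) (t : ℝ) (ht : 0 < t)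
    (hzero : (fun i => (x i : ℂ)) ⬝ᵥ
        (NormedSpace.exp ((Complex.I * t) • A.map Complex.ofReal) *ᵥ fun i => (x i : ℂ))
      = 0) :
    t ≥ π / (Finset.univ.sup' Finset.univ_nonempty hA.eigenvalues
        - Finset.univ.inf' Finset.univ_nonempty hA.eigenvalues) := by
  classical
  set θ := hA.eigenvalues with hθ
  set U : Matrix (Fin n) (Fin n) ℝ := (hA.eigenvectorUnitary : Matrix (Fin n) (Fin n) ℝ)
    with hUdef
  have hspec : A = U * Matrix.diagonal θ * star U := by
    have := hA.spectral_theorem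
    rwa [RCLike.ofReal_real_eq_id, Function.id_comp] at this
  have hU1 : U * star U = 1 := by
    have := (hA.eigenvectorUnitary).2
    exact (Unitary.mem_iff.mp this).2
  have hU2 : star U * U = 1 := by
    have := (hA.eigenvectorUnitary).2
    exact (Unitary.mem_iff.mp this).1
  -- complex versions
  set f : ℝ →+* ℂ := Complex.ofRealHom with hf
  set Uc : Matrix (Fin n) (Fin n) ℂ := U.map f with hUc
  have hstar_map : (star U).map f = Ucᴴ := by
    ext i j
    simp [hUc, Matrix.map_apply, Matrix.conjTranspose_apply, Matrix.star_apply, hf,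
      Complex.ofRealHom_eq_coe, Complex.conj_ofReal]
  have hBc : A.map Complex.ofReal
      = Uc * Matrix.diagonal (fun j => (θ j : ℂ)) * Ucᴴ := by
    have : A.map f = (U * Matrix.diagonal θ * star U).map f := by rw [← hspec]
    rw [Matrix.map_mul, Matrix.map_mul, hstar_map] at this
    have hdiag : (Matrix.diagonal θ).map f = Matrix.diagonal (fun j => (θ j : ℂ)) := by
      rw [Matrix.diagonal_map (map_zero f)]
      rfl
    rw [hdiag] at this
    exact this
  have hUc1 : Uc * Ucᴴ = 1 := by
    have : (U * star U).map f = (1 : Matrix (Fin n) (Fin n) ℝ).map f := by rw [hU1]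
    rwa [Matrix.map_mul, hstar_map, Matrix.map_one f (map_zero f) (map_one f)] at this
  have hUc2 : Ucᴴ * Uc = 1 := by
    have : (star U * U).map f = (1 : Matrix (Fin n) (Fin n) ℝ).map f := by rw [hU2]
    rwa [Matrix.map_mul, hstar_map, Matrix.map_one f (map_zero f) (map_one f)] at this
  have hUcUnit : IsUnit Uc := ⟨⟨Uc, Ucᴴ, hUc1, hUc2⟩, rfl⟩
  have hUcInv : Uc⁻¹ = Ucᴴ := Matrix.inv_eq_right_inv hUc1
  -- exponential
  have hsmul : (Complex.I * t) • A.map Complex.ofReal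
      = Uc * Matrix.diagonal (fun j => Complex.I * t * θ j) * Uc⁻¹ := by
    rw [hBc, hUcInv, ← Matrix.smul_mul, ← Matrix.mul_smul]
    congr 1
    congr 1
    ext i j
    by_cases hij : i = j <;> simp [Matrix.diagonal_apply, hij, mul_assoc]
  have hexp : NormedSpace.exp ((Complex.I * t) • A.map Complex.ofReal)
      = Uc * Matrix.diagonal (fun j => Complex.exp (Complex.I * t * θ j)) * Ucᴴ := by
    rw [hsmul, Matrix.exp_conj Uc _ hUcUnit, Matrix.exp_diagonal, hUcInv]
    congr 2
    rw [Pi.exp_def]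
    funext j
    rw [← Complex.exp_eq_exp_ℂ]
  -- the real vector y
  set y : Fin n → ℝ := (star U) *ᵥ x with hy
  have hycoord : Ucᴴ *ᵥ (fun i => (x i : ℂ)) = fun j => (y j : ℂ) := by
    funext j
    rw [← hstar_map]
    exact (RingHom.map_mulVec f (star U) x j).symm
  have hUcT : Ucᵀ = Ucᴴ := by
    ext i j
    simp [hUc, Matrix.conjTranspose_apply, Matrix.transpose_apply, hf,
      Complex.ofRealHom_eq_coe, Complex.conj_ofReal]
  -- rewrite hzero as a scalar sum
  have hsum : ∑ j, Complex.exp (Complex.I * t * θ j) * ((y j : ℂ)) ^ 2 = 0 := by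
    rw [hexp] at hzero
    rw [← Matrix.mulVec_mulVec, ← Matrix.mulVec_mulVec, hycoord] at hzero
    rw [Matrix.dotProduct_mulVec] at hzero
    have hvm : (fun i => (x i : ℂ)) ᵥ* Uc = fun j => (y j : ℂ) := by
      have := Matrix.vecMul_transpose Ucᵀ (fun i => (x i : ℂ))
      rw [Matrix.transpose_transpose] at this
      rw [this, hUcT, hycoord]
    rw [hvm] at hzero
    rw [← hzero]
    refine Finset.sum_congr rfl fun j _ => ?_
    rw [Matrix.mulVec_diagonal]
    ring
  -- y is a unit vector
  have hynorm : ∑ j, y j ^ 2 = 1 := by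
    have h1 : y ⬝ᵥ y = x ⬝ᵥ x := by
      conv_lhs => rw [hy]
      rw [Matrix.dotProduct_mulVec y (star U) x]
      have hsU : star U = Uᵀ := by
        ext i j
        simp [Matrix.star_apply]
      have : y ᵥ* star U = U *ᵥ y := by rw [hsU, Matrix.vecMul_transpose]
      rw [this, hy, Matrix.mulVec_mulVec, hU1, Matrix.one_mulVec]
    have h2 : y ⬝ᵥ y = ∑ j, y j ^ 2 := by
      simp [dotProduct, sq]
    have h3 : x ⬝ᵥ x = ∑ i, x i ^ 2 := by
      simp [dotProduct, sq]
    rw [h2, h3] at h1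
    rw [h1, hx]
  exact aux_min_time θ y t ht hynorm hsum
end

section
/- Suppose A = P_1 + ⋯ + P_d where the P_r are pairwise commuting symmetric permutation matrices with P_r² = I. Then exp(itA) = Π_{r=1}^d (cos(t)I + i·sin(t)P_r). In particular exp(iπA) = (−1)^d I, and exp(i(π/2)A) = i^d P_1 P_2 ⋯ P_d. -/
open Matrix Complex Real

section Aux

variable {V : Type*} [Fintype V] [DecidableEq V]

theorem exp_smul_involution (Q : Matrix V V ℂ) (hQ : Q * Q = 1) (t : ℝ) :
    NormedSpace.exp ((Complex.I * t) • Q)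
      = (Real.cos t : ℂ) • (1 : Matrix V V ℂ) + (Complex.I * Real.sin t) • Q := by
  letI : NormedRing (Matrix V V ℂ) := Matrix.linftyOpNormedRing
  letI : NormedAlgebra ℂ (Matrix V V ℂ) := Matrix.linftyOpNormedAlgebra
  have hQ2 : Q ^ 2 = 1 := by rw [sq, hQ]
  have hpow_even : ∀ n : ℕ, Q ^ (2 * n) = 1 := fun n => by rw [pow_mul, hQ2, one_pow]
  have hpow_odd : ∀ n : ℕ, Q ^ (2 * n + 1) = Q := fun n => by
    rw [pow_succ, hpow_even, one_mul]
  have hsum : HasSum (fun n : ℕ => ((Nat.factorial n : ℂ))⁻¹ • ((Complex.I * t) • Q) ^ n)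
      ((Real.cos t : ℂ) • (1 : Matrix V V ℂ) + (Complex.I * Real.sin t) • Q) := by
    refine HasSum.even_add_odd ?_ ?_
    · have h := (Complex.hasSum_cos (t : ℂ)).smul_const (1 : Matrix V V ℂ)
      rw [← Complex.ofReal_cos] at h
      convert h using 2 with n
      rw [smul_pow, hpow_even, smul_smul]
      congr 1
      rw [mul_pow, pow_mul, Complex.I_sq, div_eq_mul_inv]
      ring
    · have h := ((Complex.hasSum_sin (t : ℂ)).mul_left Complex.I).smul_const Q
      rw [← Complex.ofReal_sin] at h
      convert h using 2 with n
      rw [smul_pow, hpow_odd, smul_smul]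
      congr 1
      rw [mul_pow, pow_succ, pow_mul, Complex.I_sq, div_eq_mul_inv]
      ring
  exact (NormedSpace.exp_series_hasSum_exp' ((Complex.I * t) • Q)).unique hsum

theorem exp_sum_comm : ∀ {n : ℕ} (f : Fin n → Matrix V V ℂ),
    (∀ i j, Commute (f i) (f j)) →
    NormedSpace.exp (∑ i, f i) = (List.ofFn fun i => NormedSpace.exp (f i)).prod
  | 0, f, _ => by simp
  | n + 1, f, h => by
    letI : NormedRing (Matrix V V ℂ) := Matrix.linftyOpNormedRing
    letI : NormedAlgebra ℂ (Matrix V V ℂ) := Matrix.linftyOpNormedAlgebra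
    rw [Fin.sum_univ_succ, List.ofFn_succ, List.prod_cons,
      Matrix.exp_add_of_commute, exp_sum_comm _ (fun i j => h _ _)]
    exact Commute.sum_right _ _ _ (fun i _ => h 0 i.succ)

theorem prod_ofFn_smul {n : ℕ} (c : ℂ) (f : Fin n → Matrix V V ℂ) :
    (List.ofFn fun i => c • f i).prod = c ^ n • (List.ofFn f).prod := by
  induction n with
  | zero => simp
  | succ n ih =>
    rw [List.ofFn_succ, List.ofFn_succ, List.prod_cons, List.prod_cons,
      ih (fun i => f i.succ), smul_mul_smul_comm, ← pow_succ']

end Aux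

/-- If `A = P₁ + ⋯ + P_d` is a sum of pairwise commuting symmetric permutation matrices
with `P_r² = I`, then `exp(itA) = Π_r (cos t • I + i sin t • P_r)`; in particular
`exp(iπA) = (-1)^d I` and `exp(i(π/2)A) = i^d P₁⋯P_d`. -/
theorem exp_sum_commuting_involutions {V : Type*} [Fintype V] [DecidableEq V]
    (d : ℕ) (P : Fin d → Matrix V V ℝ)
    (hperm : ∀ r, ∃ σ : Equiv.Perm V, P r = σ.permMatrix ℝ)
    (hsym : ∀ r, (P r)ᵀ = P r)
    (hinv : ∀ r, P r * P r = 1)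
    (hcomm : ∀ r s, Commute (P r) (P s)) :
    (∀ t : ℝ, NormedSpace.exp ((Complex.I * t) • (∑ r, P r).map Complex.ofReal)
        = (List.ofFn fun r => (Real.cos t : ℂ) • (1 : Matrix V V ℂ)
            + (Complex.I * Real.sin t) • (P r).map Complex.ofReal).prod) ∧
    NormedSpace.exp ((Complex.I * π) • (∑ r, P r).map Complex.ofReal)
      = ((-1 : ℂ) ^ d) • (1 : Matrix V V ℂ) ∧
    NormedSpace.exp ((Complex.I * (π / 2)) • (∑ r, P r).map Complex.ofReal)
      = (Complex.I ^ d) • (List.ofFn fun r => (P r).map Complex.ofReal).prod := by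
  set Q : Fin d → Matrix V V ℂ := fun r => (P r).map Complex.ofReal with hQdef
  have hmap : ∀ M : Matrix V V ℝ, M.map Complex.ofReal
      = Complex.ofRealHom.mapMatrix M := fun M => rfl
  have hQinv : ∀ r, Q r * Q r = 1 := fun r => by
    simp only [hQdef, hmap]
    rw [← _root_.map_mul, hinv r, _root_.map_one]
  have hQcomm : ∀ r s, Commute (Q r) (Q s) := fun r s => by
    simp only [hQdef, hmap]
    rw [Commute, SemiconjBy, ← _root_.map_mul, ← _root_.map_mul, hcomm r s]
  have hsum : (∑ r, P r).map Complex.ofReal = ∑ r, Q r := by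
    simp only [hQdef, hmap, map_sum]
  have key : ∀ t : ℝ, NormedSpace.exp ((Complex.I * t) • (∑ r, P r).map Complex.ofReal)
      = (List.ofFn fun r => (Real.cos t : ℂ) • (1 : Matrix V V ℂ)
          + (Complex.I * Real.sin t) • Q r).prod := by
    intro t
    rw [hsum, Finset.smul_sum, exp_sum_comm _
      (fun i j => ((hQcomm i j).smul_left _).smul_right _)]
    exact congrArg List.prod (congrArg List.ofFn (funext fun i =>
      exp_smul_involution (Q i) (hQinv i) t))
  refine ⟨key, ?_, ?_⟩
  · rw [key π]
    simp only [Real.cos_pi, Real.sin_pi, Complex.ofReal_neg, Complex.ofReal_one,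
      Complex.ofReal_zero, mul_zero, zero_smul, add_zero]
    rw [List.ofFn_const, List.prod_replicate, smul_pow, one_pow]
  · rw [show (Complex.I * ((π : ℂ) / 2)) = Complex.I * ((π / 2 : ℝ) : ℂ) by push_cast; ring,
      key (π / 2)]
    simp only [Real.cos_pi_div_two, Real.sin_pi_div_two, Complex.ofReal_zero,
      Complex.ofReal_one, mul_one, zero_smul, zero_add]
    exact prod_ofFn_smul Complex.I Q
end

section
/- Let X be a Cayley graph of ℤ_2^d with connection set C = {c_1,…,c_m} (nonzero, distinct). If σ = c_1 + ⋯ + c_m ≠ 0, then there is perfect state transfer in X from 0 to σ at time π/2. -/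
open Matrix Complex Real

namespace CubelikeAux

variable {d : ℕ}

/-- Permutation matrix of translation by `c` on `ℤ₂^d`. -/
noncomputable def P (d : ℕ) (c : Fin d → ZMod 2) : Matrix (Fin d → ZMod 2) (Fin d → ZMod 2) ℂ :=
  Matrix.of (fun x y => if x + y = c then (1 : ℂ) else 0)

lemma add_self (x : Fin d → ZMod 2) : x + x = 0 := by
  funext i
  exact (by decide : ∀ a : ZMod 2, a + a = 0) (x i)

lemma shift (a b c : Fin d → ZMod 2) : a + b = c ↔ b = a + c := by
  constructor
  · intro h; rw [← h, ← add_assoc, add_self, zero_add]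
  · intro h; rw [h, ← add_assoc, add_self, zero_add]

lemma P_mul (c c' : Fin d → ZMod 2) : P d c * P d c' = P d (c + c') := by
  ext x y
  simp only [P, Matrix.mul_apply, Matrix.of_apply, ite_mul, one_mul, zero_mul]
  simp_rw [shift x _ c]
  rw [Finset.sum_ite_eq' Finset.univ (x + c) (fun z => if z + y = c' then (1:ℂ) else 0)]
  simp only [Finset.mem_univ, if_true]
  congr 1
  simp only [eq_iff_iff]
  rw [shift (x + c) y c', shift x y (c + c'), add_assoc]

lemma P_zero : P d 0 = (1 : Matrix (Fin d → ZMod 2) (Fin d → ZMod 2) ℂ) := by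
  ext x y
  simp only [P, Matrix.of_apply, Matrix.one_apply]
  congr 1
  simp only [eq_iff_iff]
  rw [shift x y 0, add_zero, eq_comm]

lemma P_sq (c : Fin d → ZMod 2) : P d c * P d c = 1 := by
  rw [P_mul, add_self, P_zero]

lemma P_comm (c c' : Fin d → ZMod 2) : Commute (P d c) (P d c') := by
  unfold Commute SemiconjBy
  rw [P_mul, P_mul, add_comm]

/-- `exp((iπ/2) • Q) = i • Q` for an involutory matrix `Q`. -/
lemma exp_smul_involution {ι : Type*} [Fintype ι] [DecidableEq ι]
    (Q : Matrix ι ι ℂ) (hQ : Q * Q = 1) :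
    NormedSpace.exp ((Complex.I * (π / 2)) • Q) = Complex.I • Q := by
  have hpow_even : ∀ k : ℕ, Q ^ (2 * k) = 1 := by
    intro k
    rw [pow_mul, pow_two, hQ, one_pow]
  have hpow_odd : ∀ k : ℕ, Q ^ (2 * k + 1) = Q := by
    intro k
    rw [pow_succ, hpow_even, one_mul]
  have key : HasSum (fun n : ℕ => ((n.factorial : ℂ)⁻¹) • ((Complex.I * (π / 2)) • Q) ^ n)
      ((Complex.cos ((π / 2 : ℝ) : ℂ)) • (1 : Matrix ι ι ℂ) +
        (Complex.I * Complex.sin ((π / 2 : ℝ) : ℂ)) • Q) := by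
    apply HasSum.even_add_odd
    · have hc := Complex.hasSum_cos ((π / 2 : ℝ) : ℂ)
      have h2 := hc.smul_const (1 : Matrix ι ι ℂ)
      convert h2 using 2 with k
      rw [smul_pow, hpow_even, smul_smul]
      congr 1
      rw [mul_pow, pow_mul, Complex.I_sq]
      field_simp
      push_cast
      ring
    · have hs := Complex.hasSum_sin ((π / 2 : ℝ) : ℂ)
      have h2 := (hs.mul_left Complex.I).smul_const Q
      convert h2 using 2 with k
      rw [smul_pow, hpow_odd, smul_smul]
      congr 1
      rw [mul_pow, pow_succ Complex.I, pow_mul, Complex.I_sq]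
      push_cast
      field_simp
  rw [NormedSpace.exp_eq_tsum (𝕂 := ℂ)]
  dsimp only
  rw [key.tsum_eq]
  have h1 : Complex.cos ((π / 2 : ℝ) : ℂ) = 0 := by
    rw [← Complex.ofReal_cos, Real.cos_pi_div_two, Complex.ofReal_zero]
  have h2 : Complex.sin ((π / 2 : ℝ) : ℂ) = 1 := by
    rw [← Complex.ofReal_sin, Real.sin_pi_div_two, Complex.ofReal_one]
  rw [h1, h2, zero_smul, zero_add, mul_one]

lemma exp_sum (s : Finset (Fin d → ZMod 2)) :
    NormedSpace.exp (∑ c ∈ s, (Complex.I * (π / 2)) • P d c)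
      = (Complex.I) ^ s.card • P d (∑ c ∈ s, c) := by
  induction s using Finset.induction_on with
  | empty =>
      simp [P_zero, NormedSpace.exp_zero]
  | insert a s ha ih =>
      rw [Finset.sum_insert ha, Finset.sum_insert ha, Finset.card_insert_of_notMem ha]
      have hcomm : Commute ((Complex.I * (π / 2)) • P d a)
          (∑ c ∈ s, (Complex.I * (π / 2)) • P d c) := by
        apply Commute.sum_right
        intro c _
        exact ((P_comm a c).smul_left _).smul_right _
      rw [Matrix.exp_add_of_commute _ _ hcomm, ih,
        exp_smul_involution (P d a) (P_sq a)]
      rw [smul_mul_assoc, mul_smul_comm, P_mul, smul_smul, pow_succ]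
      ring_nf

end CubelikeAux

/-- Let `X` be a Cayley graph of `ℤ₂^d` with connection set `C` (not containing `0`).
If the sum `σ` of the elements of `C` is nonzero, then there is perfect state transfer
in `X` from `0` to `σ` at time `π/2`. -/
theorem cubelike_pst (d : ℕ) (C : Finset (Fin d → ZMod 2))
    (h0 : (0 : Fin d → ZMod 2) ∉ C)
    (hσ : ∑ c ∈ C, c ≠ 0) :
    ‖(NormedSpace.exp ((Complex.I * (π / 2)) •
          Matrix.of (fun x y : Fin d → ZMod 2 => if x + y ∈ C then (1 : ℂ) else 0)))
        0 (∑ c ∈ C, c)‖ = 1 := by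
  have hA : Matrix.of (fun x y : Fin d → ZMod 2 => if x + y ∈ C then (1 : ℂ) else 0)
      = ∑ c ∈ C, CubelikeAux.P d c := by
    ext x y
    simp only [Matrix.of_apply, Matrix.sum_apply, CubelikeAux.P]
    rw [Finset.sum_ite_eq C (x + y) (fun _ => (1 : ℂ))]
  rw [hA, Finset.smul_sum, CubelikeAux.exp_sum]
  simp only [Matrix.smul_apply, CubelikeAux.P, Matrix.of_apply, zero_add, if_pos rfl,
    if_true, smul_eq_mul, mul_one]
  rw [norm_pow, Complex.norm_I, one_pow]
end

section
/- Suppose M is a matrix commuting with the adjacency matrix A, M e_u = e_u, and there is perfect state transfer from u to v at time τ. Then M e_v = e_v. -/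
open Matrix Complex

/-- If `M` commutes with the adjacency matrix, fixes `e_u`, and there is perfect state
transfer from `u` to `v` at time `τ`, then `M` fixes `e_v`. -/
theorem pst_fixed_vector {V : Type*} [Fintype V] [DecidableEq V]
    (G : SimpleGraph V) [DecidableRel G.Adj]
    (M : Matrix V V ℂ) (hM : M * G.adjMatrix ℂ = G.adjMatrix ℂ * M)
    (u v : V) (hMu : M *ᵥ Pi.single u 1 = (Pi.single u 1 : V → ℂ))
    (τ : ℝ) (γ : ℂ) (hγ : ‖γ‖ = 1)
    (hpst : NormedSpace.exp ((Complex.I * τ) • G.adjMatrix ℂ) *ᵥ Pi.single u 1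
      = γ • (Pi.single v 1 : V → ℂ)) :
    M *ᵥ Pi.single v 1 = (Pi.single v 1 : V → ℂ) := by
  have hcomm : Commute M ((Complex.I * τ) • G.adjMatrix ℂ) := (Commute.smul_right (hM : Commute M (G.adjMatrix ℂ)) _)
  have hE : Commute M (NormedSpace.exp ((Complex.I * τ) • G.adjMatrix ℂ)) :=
    hcomm.exp_right
  have hγ0 : γ ≠ 0 := by
    intro h; rw [h] at hγ; simp at hγ
  have key : M *ᵥ (γ • (Pi.single v 1 : V → ℂ)) = γ • (Pi.single v 1 : V → ℂ) := by
    rw [← hpst, mulVec_mulVec, hE.eq, ← mulVec_mulVec, hMu]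
  have : γ • (M *ᵥ Pi.single v 1) = γ • (Pi.single v 1 : V → ℂ) := by
    rw [← mulVec_smul, key]
  exact smul_right_injective _ hγ0 this
end

section
/- Suppose there is pretty good state transfer from u to v: there is a sequence of real times t_k and a scalar γ with |γ| = 1 such that H(t_k)e_u → γ e_v. Then E_r e_u = ± E_r e_v for each spectral idempotent E_r. -/
open Matrix Complex Filter

lemma mul_exp_of_eigen {n : Type*} [Fintype n] [DecidableEq n]
    (P M : Matrix n n ℂ) (c : ℂ) (h : P * M = c • P) :
    P * NormedSpace.exp M = Complex.exp c • P := by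
  letI : SeminormedRing (Matrix n n ℂ) := Matrix.linftyOpSemiNormedRing
  letI : NormedRing (Matrix n n ℂ) := Matrix.linftyOpNormedRing
  letI : NormedAlgebra ℂ (Matrix n n ℂ) := Matrix.linftyOpNormedAlgebra
  have hpow : ∀ k : ℕ, P * M ^ k = c ^ k • P := by
    intro k; induction k with
    | zero => simp
    | succ k ih =>
        rw [pow_succ, ← mul_assoc, ih, smul_mul_assoc, h, smul_smul, ← pow_succ]
  have hs := NormedSpace.expSeries_summable' (𝕂 := ℂ) M
  rw [NormedSpace.exp_eq_tsum (𝕂 := ℂ)]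
  beta_reduce
  erw [← Summable.tsum_mul_left P hs]
  have : ∀ k : ℕ, P * (((k.factorial : ℂ))⁻¹ • M ^ k) = (((k.factorial : ℂ))⁻¹ * c ^ k) • P := by
    intro k
    rw [mul_smul_comm, hpow, smul_smul]
  simp_rw [this]
  rw [Summable.tsum_smul_const]
  · congr 1
    rw [Complex.exp_eq_exp_ℂ, NormedSpace.exp_eq_tsum (𝕂 := ℂ)]
    simp_rw [smul_eq_mul]
  · exact NormedSpace.expSeries_summable' (𝕂 := ℂ) c

/-- If there is pretty good state transfer from `u` to `v` (i.e. `H(t_k)e_u → γ e_v` along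
some sequence of times, with `|γ| = 1`), then `E_r e_u = ± E_r e_v` for each spectral
idempotent `E_r` of the adjacency matrix. -/
theorem pgst_projections_pm {V : Type*} [Fintype V] [DecidableEq V]
    (G : SimpleGraph V) [DecidableRel G.Adj]
    {m : ℕ} (θ : Fin m → ℝ) (E : Fin m → Matrix V V ℝ)
    (hθ : Function.Injective θ)
    (hsym : ∀ r, (E r)ᵀ = E r)
    (hidem : ∀ r, E r * E r = E r)
    (horth : ∀ r s, r ≠ s → E r * E s = 0)
    (hsum : ∑ r, E r = 1)
    (hdecomp : G.adjMatrix ℝ = ∑ r, θ r • E r)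
    (u v : V) (t : ℕ → ℝ) (γ : ℂ) (hγ : ‖γ‖ = 1)
    (hpgst : Tendsto
      (fun k => NormedSpace.exp ((Complex.I * t k) • G.adjMatrix ℂ) *ᵥ Pi.single u 1)
      atTop (nhds (γ • (Pi.single v 1 : V → ℂ)))) :
    ∀ r, E r *ᵥ Pi.single u 1 = E r *ᵥ Pi.single v 1 ∨
      E r *ᵥ Pi.single u 1 = -(E r *ᵥ Pi.single v 1) := by
  intro r
  have hγ0 : γ ≠ 0 := by
    intro h; rw [h] at hγ; simp at hγ
  -- E r * A = θ r • E r over ℝ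
  have hEA : E r * G.adjMatrix ℝ = θ r • E r := by
    rw [hdecomp, Finset.mul_sum]
    rw [Finset.sum_eq_single r]
    · rw [mul_smul_comm, hidem]
    · intro s _ hs
      rw [mul_smul_comm, horth r s (Ne.symm hs), smul_zero]
    · intro h; exact absurd (Finset.mem_univ r) h
  -- complexify
  set P : Matrix V V ℂ := (E r).map Complex.ofRealHom with hPdef
  have hadjC : G.adjMatrix ℂ = (G.adjMatrix ℝ).map Complex.ofRealHom := by
    ext i j
    simp [SimpleGraph.adjMatrix_apply, Matrix.map_apply, apply_ite Complex.ofRealHom]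
  have hPA : ∀ k : ℕ, P * ((Complex.I * t k) • G.adjMatrix ℂ)
      = (Complex.I * t k * θ r) • P := by
    intro k
    have h1 : P * G.adjMatrix ℂ = (θ r : ℂ) • P := by
      rw [hadjC, hPdef, ← Matrix.map_mul, hEA]
      ext i j
      simp [Matrix.map_apply]
    rw [mul_smul_comm, h1, smul_smul, mul_assoc]
  -- apply P to the limit
  have hcont : Continuous fun x : V → ℂ => P *ᵥ x := by
    have := (Matrix.mulVecLin P).continuous_of_finiteDimensional
    exact this
  have hT : Tendsto (fun k => P *ᵥ (NormedSpace.exp ((Complex.I * t k) • G.adjMatrix ℂ)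
      *ᵥ Pi.single u 1)) atTop (nhds (P *ᵥ (γ • (Pi.single v 1 : V → ℂ)))) :=
    (hcont.tendsto _).comp hpgst
  set aC : V → ℂ := P *ᵥ Pi.single u 1 with haCdef
  set bC : V → ℂ := P *ᵥ Pi.single v 1 with hbCdef
  have hT2 : Tendsto (fun k => Complex.exp (Complex.I * t k * θ r) • aC) atTop
      (nhds (γ • bC)) := by
    have h1 : ∀ k, P *ᵥ (NormedSpace.exp ((Complex.I * t k) • G.adjMatrix ℂ)
        *ᵥ Pi.single u 1) = Complex.exp (Complex.I * t k * θ r) • aC := by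
      intro k
      rw [Matrix.mulVec_mulVec, mul_exp_of_eigen P _ _ (hPA k), Matrix.smul_mulVec]
    have h2 : P *ᵥ (γ • (Pi.single v 1 : V → ℂ)) = γ • bC := by
      rw [Matrix.mulVec_smul]
    rw [h2] at hT
    exact hT.congr h1
  -- real vectors and their complexifications
  set a : V → ℝ := E r *ᵥ Pi.single u 1 with hadef
  set b : V → ℝ := E r *ᵥ Pi.single v 1 with hbdef
  have hsingle : ∀ w : V, (Complex.ofRealHom ∘ (Pi.single w 1 : V → ℝ))
      = (Pi.single w 1 : V → ℂ) := by
    intro w; funext i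
    simp [Pi.single_apply, apply_ite Complex.ofRealHom]
  have haC : ∀ i, aC i = (a i : ℂ) := by
    intro i
    rw [haCdef, hadef, hPdef, ← hsingle u, ← RingHom.map_mulVec]
    rfl
  have hbC : ∀ i, bC i = (b i : ℂ) := by
    intro i
    rw [hbCdef, hbdef, hPdef, ← hsingle v, ← RingHom.map_mulVec]
    rfl
  -- coordinatewise limits
  have hcoord : ∀ i, Tendsto (fun k => Complex.exp (Complex.I * t k * θ r) * aC i) atTop
      (nhds (γ * bC i)) := by
    intro i
    have := ((continuous_apply i).tendsto _).comp hT2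
    simpa [Function.comp_def] using this
  by_cases ha : a = 0
  · -- then aC = 0, hence γ • bC = 0, hence b = 0
    have haC0 : ∀ i, aC i = 0 := fun i => by rw [haC i, ha]; simp
    have hb0 : ∀ i, b i = 0 := by
      intro i
      have h1 : Tendsto (fun _ : ℕ => (0 : ℂ)) atTop (nhds (γ * bC i)) := by
        have := hcoord i
        simpa [haC0 i] using this
      have h2 : γ * bC i = 0 := tendsto_nhds_unique h1 tendsto_const_nhds
      have h3 : bC i = 0 := by
        rcases mul_eq_zero.mp h2 with h | h
        · exact absurd h hγ0
        · exact h
      rw [hbC i] at h3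
      exact_mod_cast h3
    left
    rw [ha]
    funext i
    rw [Pi.zero_apply, hb0 i]
  · -- pick a coordinate where a is nonzero
    obtain ⟨j, hj⟩ : ∃ j, a j ≠ 0 := by
      by_contra h
      push_neg at h
      exact ha (funext h)
    have haCj : aC j ≠ 0 := by
      rw [haC j]; exact_mod_cast hj
    set ζ : ℂ := γ * bC j / aC j with hζdef
    have hexp : Tendsto (fun k => Complex.exp (Complex.I * t k * θ r)) atTop (nhds ζ) := by
      have := (hcoord j).div_const (aC j)
      simpa [mul_div_cancel_right₀ _ haCj] using this
    have habsexp : ∀ k : ℕ, ‖Complex.exp (Complex.I * t k * θ r)‖ = 1 := by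
      intro k
      rw [Complex.norm_exp]
      simp [Complex.mul_re]
    have habsζ : ‖ζ‖ = 1 := by
      have h1 : Tendsto (fun k => ‖Complex.exp (Complex.I * t k * θ r)‖) atTop
          (nhds ‖ζ‖) := (continuous_norm.tendsto _).comp hexp
      have h2 : Tendsto (fun _ : ℕ => (1 : ℝ)) atTop (nhds ‖ζ‖) := by
        simpa [habsexp] using h1
      exact tendsto_nhds_unique h2 tendsto_const_nhds
    have hζ0 : ζ ≠ 0 := by
      intro h; rw [h] at habsζ; simp at habsζ
    have hlim : ∀ i, ζ * aC i = γ * bC i := by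
      intro i
      exact tendsto_nhds_unique (hexp.mul_const (aC i)) (hcoord i)
    have hbCj : bC j ≠ 0 := by
      intro h
      have := hlim j
      rw [h, mul_zero, mul_eq_zero] at this
      rcases this with h' | h'
      · exact hζ0 h'
      · exact haCj h'
    -- c0 = γ / ζ satisfies aC = c0 • bC
    have hc0 : ∀ i, aC i = (γ / ζ) * bC i := by
      intro i
      field_simp
      rw [mul_comm (aC i) ζ, hlim i, mul_comm]
    -- γ / ζ is real: equal to a j / b j
    have hbj : b j ≠ 0 := by
      intro h; apply hbCj; rw [hbC j, h]; simp
    have hbjC : ((b j : ℝ) : ℂ) ≠ 0 := by exact_mod_cast hbj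
    have hval : (γ / ζ) = ((a j / b j : ℝ) : ℂ) := by
      have h := hc0 j
      rw [haC j, hbC j] at h
      rw [Complex.ofReal_div, h, mul_div_assoc, div_self hbjC, mul_one]
    have habs1 : |a j / b j| = 1 := by
      have := habsζ
      have h1 : ‖γ / ζ‖ = 1 := by
        rw [norm_div, hγ, habsζ, div_one]
      rw [hval] at h1
      rwa [Complex.norm_real, Real.norm_eq_abs] at h1
    have hreal : ∀ i, a i = (a j / b j) * b i := by
      intro i
      have := hc0 i
      rw [haC i, hbC i, hval] at this
      exact_mod_cast this
    rcases abs_eq (by norm_num : (0:ℝ) ≤ 1) |>.mp habs1 with h1 | h1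
    · left
      funext i
      rw [hreal i, h1, one_mul]
    · right
      funext i
      rw [Pi.neg_apply, hreal i, h1]
      ring
end

section
/- If X is a k-regular graph on n vertices with perfect state transfer from u to v at time τ, and τ is an integer multiple of 2π/n, then the complement of X has perfect state transfer from u to v at time τ. -/
open Matrix Complex Real

theorem exp_smul_idem {V : Type*} [Fintype V] [DecidableEq V]
    (P : Matrix V V ℂ) (hP : P * P = P) (α : ℂ) :
    NormedSpace.exp (α • P) = 1 + (Complex.exp α - 1) • P := by
  letI : SeminormedRing (Matrix V V ℂ) := Matrix.linftyOpSemiNormedRing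
  letI : NormedRing (Matrix V V ℂ) := Matrix.linftyOpNormedRing
  letI : NormedAlgebra ℂ (Matrix V V ℂ) := Matrix.linftyOpNormedAlgebra
  have hpow : ∀ n : ℕ, P ^ (n + 1) = P := by
    intro n
    induction n with
    | zero => simp
    | succ n ih => rw [pow_succ, ih, hP]
  have hterm : ∀ n : ℕ, ((n + 1).factorial : ℂ)⁻¹ • (α • P) ^ (n + 1)
      = (((n + 1).factorial : ℂ)⁻¹ * α ^ (n + 1)) • P := by
    intro n
    rw [smul_pow, hpow, smul_smul]
  have hsum := NormedSpace.expSeries_summable' (𝕂 := ℂ) (α • P)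
  have hsumC := NormedSpace.expSeries_summable' (𝕂 := ℂ) α
  have hsumC' : Summable fun n : ℕ => (((n + 1).factorial : ℂ)⁻¹ * α ^ (n + 1)) := by
    have := hsumC.comp_injective (i := fun n : ℕ => n + 1) (add_left_injective 1)
    simpa [Function.comp_def, smul_eq_mul] using this
  rw [NormedSpace.exp_eq_tsum (𝕂 := ℂ)]
  beta_reduce
  erw [Summable.tsum_eq_zero_add hsum]
  simp only [hterm]
  rw [Summable.tsum_smul_const hsumC']
  have hexp : Complex.exp α = 1 + ∑' n : ℕ, (((n + 1).factorial : ℂ)⁻¹ * α ^ (n + 1)) := by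
    rw [Complex.exp_eq_exp_ℂ, NormedSpace.exp_eq_tsum (𝕂 := ℂ)]
    beta_reduce
    rw [Summable.tsum_eq_zero_add hsumC]
    simp [smul_eq_mul]
  rw [hexp]
  simp

/-- If `X` is a `k`-regular graph on `n` vertices with perfect state transfer from `u` to
`v` at time `τ`, and `τ` is an integer multiple of `2π/n`, then the complement of `X` has
perfect state transfer from `u` to `v` at time `τ`. -/
theorem pst_complement {V : Type*} [Fintype V] [DecidableEq V]
    (G : SimpleGraph V) [DecidableRel G.Adj]
    (k : ℕ) (hreg : G.IsRegularOfDegree k)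
    (u v : V) (τ : ℝ) (γ : ℂ) (hγ : ‖γ‖ = 1)
    (hpst : NormedSpace.exp ((Complex.I * τ) • G.adjMatrix ℂ) *ᵥ Pi.single u 1
      = γ • (Pi.single v 1 : V → ℂ))
    (m : ℤ) (hτ : τ = m * (2 * π / Fintype.card V)) :
    ∃ γ' : ℂ, ‖γ'‖ = 1 ∧
      NormedSpace.exp ((Complex.I * τ) • Gᶜ.adjMatrix ℂ) *ᵥ Pi.single u 1
        = γ' • (Pi.single v 1 : V → ℂ) := by
  have : Nonempty V := ⟨u⟩
  set n : ℕ := Fintype.card V with hn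
  have hn0 : (n : ℝ) ≠ 0 := Nat.cast_ne_zero.2 Fintype.card_ne_zero
  have hn0' : (n : ℂ) ≠ 0 := Nat.cast_ne_zero.2 Fintype.card_ne_zero
  set A : Matrix V V ℂ := G.adjMatrix ℂ with hA
  set J : Matrix V V ℂ := Matrix.of fun _ _ => (1 : ℂ) with hJ
  -- complement adjacency matrix
  have hcompl : Gᶜ.adjMatrix ℂ = J - 1 - A := by
    ext i j
    by_cases hij : i = j
    · subst hij; simp [hJ, hA]
    · by_cases hadj : G.Adj i j <;>
        simp [hJ, hA, SimpleGraph.adjMatrix_apply, Matrix.one_apply, hij, hadj, SimpleGraph.compl_adj]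
  -- J * J = n • J
  have hJJ : J * J = (n : ℂ) • J := by
    ext i j
    simp [hJ, Matrix.mul_apply, hn]
  -- commutation of A and J
  have hrow : ∀ i : V, ∑ x : V, A i x = (k : ℂ) := by
    intro i
    simp only [hA, SimpleGraph.adjMatrix_apply]
    rw [Finset.sum_boole]
    have : (Finset.univ.filter fun x => G.Adj i x) = G.neighborFinset i := by
      ext x; simp [SimpleGraph.neighborFinset]
    rw [this]
    rw [SimpleGraph.neighborFinset_eq_filter] at this
    simp [SimpleGraph.card_neighborFinset_eq_degree, hreg i]
  have hAJ : Commute A J := by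
    unfold Commute SemiconjBy
    ext i j
    simp only [Matrix.mul_apply, hJ, Matrix.of_apply, mul_one, one_mul]
    rw [hrow i]
    have : ∀ x, A x j = A j x := by
      intro x; simp [hA, SimpleGraph.adj_comm]
    simp_rw [this]
    rw [hrow j]
  -- decompose the exponent
  have hdec : (Complex.I * τ) • Gᶜ.adjMatrix ℂ
      = (Complex.I * τ) • J + ((-(Complex.I * τ)) • (1 : Matrix V V ℂ) + (-(Complex.I * τ)) • A) := by
    rw [hcompl]
    rw [smul_sub, smul_sub]
    module
  -- split the exponential
  have hsplit : NormedSpace.exp ((Complex.I * τ) • Gᶜ.adjMatrix ℂ)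
      = NormedSpace.exp ((Complex.I * τ) • J) *
        (NormedSpace.exp ((-(Complex.I * τ)) • (1 : Matrix V V ℂ)) *
         NormedSpace.exp ((-(Complex.I * τ)) • A)) := by
    rw [hdec]
    rw [Matrix.exp_add_of_commute]
    · rw [Matrix.exp_add_of_commute]
      exact ((Commute.one_left A).smul_left _).smul_right _
    · exact (((Commute.one_right J).smul_right _).add_right
        (((hAJ.symm).smul_right _))).smul_left _
  -- exp of the J part is 1
  have hJexp : NormedSpace.exp ((Complex.I * τ) • J) = 1 := by
    have hP : ((n : ℂ)⁻¹ • J) * ((n : ℂ)⁻¹ • J) = (n : ℂ)⁻¹ • J := by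
      rw [smul_mul_smul_comm, hJJ, smul_smul]
      congr 1
      field_simp
    have hres : (Complex.I * τ) • J = (Complex.I * τ * n) • ((n : ℂ)⁻¹ • J) := by
      rw [smul_smul]
      congr 1
      field_simp
    rw [hres, exp_smul_idem _ hP]
    have hτn : (τ : ℂ) * n = m * (2 * π) := by
      have : τ * (n : ℝ) = m * (2 * π) := by
        rw [hτ]; field_simp
      calc (τ : ℂ) * n = ((τ * (n : ℝ) : ℝ) : ℂ) := by push_cast; ring
        _ = m * (2 * π) := by rw [this]; push_cast; ring
    have : Complex.exp (Complex.I * τ * n) = 1 := by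
      rw [mul_assoc, hτn]
      rw [show Complex.I * ((m : ℂ) * (2 * π)) = (m : ℂ) * (2 * π * Complex.I) by ring]
      exact Complex.exp_int_mul_two_pi_mul_I m
    rw [this]
    simp
  -- exp of the scalar part
  have h1exp : NormedSpace.exp ((-(Complex.I * τ)) • (1 : Matrix V V ℂ))
      = Complex.exp (-(Complex.I * τ)) • (1 : Matrix V V ℂ) := by
    rw [exp_smul_idem _ (one_mul 1), sub_smul, one_smul, add_sub_cancel]
  -- the conjugate-transpose part
  set E : Matrix V V ℂ := NormedSpace.exp ((Complex.I * τ) • A) with hE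
  have hAH : Aᴴ = A := by
    ext i j
    simp [hA, Matrix.conjTranspose_apply, SimpleGraph.adjMatrix_apply, apply_ite star,
      SimpleGraph.adj_comm]
  have hsymm : E.IsSymm := by
    apply Matrix.IsSymm.exp
    show _ᵀ = _
    rw [Matrix.transpose_smul, hA, SimpleGraph.transpose_adjMatrix]
  have hEH : NormedSpace.exp ((-(Complex.I * τ)) • A) = Eᴴ := by
    rw [hE, ← Matrix.exp_conjTranspose]
    congr 1
    rw [Matrix.conjTranspose_smul, hAH]
    congr 1
    simp [Complex.ext_iff]
  -- entries of E in column u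
  have hcol : ∀ i, E i u = γ * (Pi.single v 1 : V → ℂ) i := by
    intro i
    have := congrFun hpst i
    rw [Matrix.mulVec_single] at this
    simpa [hE] using this
  have hEHvec : Eᴴ *ᵥ Pi.single u 1 = (starRingEnd ℂ γ) • (Pi.single v 1 : V → ℂ) := by
    funext i
    rw [Matrix.mulVec_single_one, Matrix.col_apply]
    have h1 : Eᴴ i u = star (E u i) := rfl
    have h2 : E u i = E i u := hsymm.apply i u
    rw [h1, h2, hcol i]
    by_cases hiv : i = v
    · subst hiv; simp [Pi.single_eq_same, Complex.star_def]
    · simp [Pi.single_eq_of_ne hiv]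
  refine ⟨Complex.exp (-(Complex.I * τ)) * starRingEnd ℂ γ, ?_, ?_⟩
  · rw [norm_mul, Complex.norm_exp, Complex.norm_conj, hγ]
    simp
  · rw [hsplit, hJexp, h1exp, hEH, one_mul, Matrix.smul_mul, one_mul,
      Matrix.smul_mulVec, hEHvec, smul_smul]
end

section
/- Let A, B be real symmetric matrices with A = Σ_r θ_r E_r the spectral decomposition of A. Then exp(it(A⊗B)) = Σ_r E_r ⊗ exp(iθ_r t B). -/
open Matrix Complex Nat
open scoped Kronecker

section Aux

variable {p q : ℕ}

private lemma sum_kron {m : ℕ} (s : Finset (Fin m)) (f : Fin m → Matrix (Fin p) (Fin p) ℂ)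
    (B : Matrix (Fin q) (Fin q) ℂ) :
    (∑ r ∈ s, f r) ⊗ₖ B = ∑ r ∈ s, f r ⊗ₖ B := by
  exact map_sum ((kroneckerBilinear (R := ℂ)).flip B) f s

private lemma kron_mul_sum_eq_zero {m : ℕ} {s : Finset (Fin m)} {a : Fin m}
    (P : Fin m → Matrix (Fin p) (Fin p) ℂ)
    (horth : ∀ r ∈ s, P a * P r = 0)
    (W : Matrix (Fin q) (Fin q) ℂ) (Z : Fin m → Matrix (Fin q) (Fin q) ℂ) :
    (P a ⊗ₖ W) * (∑ r ∈ s, P r ⊗ₖ Z r) = 0 := by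
  rw [Finset.mul_sum]
  refine Finset.sum_eq_zero fun r hr => ?_
  rw [← mul_kronecker_mul, horth r hr, zero_kronecker]

private lemma sum_mul_kron_eq_zero {m : ℕ} {s : Finset (Fin m)} {a : Fin m}
    (P : Fin m → Matrix (Fin p) (Fin p) ℂ)
    (horth : ∀ r ∈ s, P r * P a = 0)
    (W : Matrix (Fin q) (Fin q) ℂ) (Z : Fin m → Matrix (Fin q) (Fin q) ℂ) :
    (∑ r ∈ s, P r ⊗ₖ Z r) * (P a ⊗ₖ W) = 0 := by
  rw [Finset.sum_mul]
  refine Finset.sum_eq_zero fun r hr => ?_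
  rw [← mul_kronecker_mul, horth r hr, zero_kronecker]

/-- `exp (P ⊗ₖ M) = (1 - P) ⊗ₖ 1 + P ⊗ₖ exp M` for a projection `P`. -/
private lemma exp_proj_kron (P : Matrix (Fin p) (Fin p) ℂ) (hP : P * P = P)
    (M : Matrix (Fin q) (Fin q) ℂ) :
    NormedSpace.exp (P ⊗ₖ M) = (1 - P) ⊗ₖ 1 + P ⊗ₖ NormedSpace.exp M := by
  letI : SeminormedRing (Matrix (Fin q) (Fin q) ℂ) := Matrix.linftyOpSemiNormedRing
  letI : NormedRing (Matrix (Fin q) (Fin q) ℂ) := Matrix.linftyOpNormedRing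
  letI : NormedAlgebra ℂ (Matrix (Fin q) (Fin q) ℂ) := Matrix.linftyOpNormedAlgebra
  letI : SeminormedRing (Matrix (Fin p × Fin q) (Fin p × Fin q) ℂ) :=
    Matrix.linftyOpSemiNormedRing
  letI : NormedRing (Matrix (Fin p × Fin q) (Fin p × Fin q) ℂ) := Matrix.linftyOpNormedRing
  letI : NormedAlgebra ℂ (Matrix (Fin p × Fin q) (Fin p × Fin q) ℂ) :=
    Matrix.linftyOpNormedAlgebra
  -- the continuous linear map `M ↦ P ⊗ₖ M`
  let L : Matrix (Fin q) (Fin q) ℂ →L[ℂ] Matrix (Fin p × Fin q) (Fin p × Fin q) ℂ :=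
    LinearMap.toContinuousLinearMap ((kroneckerBilinear (R := ℂ)) P)
  have hL : ∀ N, L N = P ⊗ₖ N := fun N => rfl
  have hpow : ∀ n : ℕ, (P ⊗ₖ M) ^ (n + 1) = P ⊗ₖ (M ^ (n + 1)) := by
    intro n
    induction n with
    | zero => simp
    | succ n ih =>
      rw [pow_succ, ih, ← mul_kronecker_mul, hP, ← pow_succ]
  have h1 : Summable fun n : ℕ => ((n ! : ℂ))⁻¹ • (P ⊗ₖ M) ^ n :=
    NormedSpace.expSeries_summable' (𝕂 := ℂ) _
  have hM : Summable fun n : ℕ => ((n ! : ℂ))⁻¹ • M ^ n :=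
    NormedSpace.expSeries_summable' (𝕂 := ℂ) _
  have h2 : Summable fun n : ℕ => ((n ! : ℂ))⁻¹ • (P ⊗ₖ (M ^ n)) := by
    have := hM.map L.toLinearMap.toAddMonoidHom L.continuous
    simpa [Function.comp_def, L.map_smul, hL] using this
  have hexpM : P ⊗ₖ NormedSpace.exp M = ∑' n : ℕ, ((n ! : ℂ))⁻¹ • (P ⊗ₖ (M ^ n)) := by
    rw [NormedSpace.exp_eq_tsum ℂ, ← hL, L.map_tsum hM]
    exact tsum_congr fun n => by rw [L.map_smul, hL]
  have key : NormedSpace.exp (P ⊗ₖ M) - P ⊗ₖ NormedSpace.exp M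
      = 1 - P ⊗ₖ (1 : Matrix (Fin q) (Fin q) ℂ) := by
    rw [NormedSpace.exp_eq_tsum ℂ, hexpM, ← Summable.tsum_sub h1 h2]
    have : (fun n : ℕ => ((n ! : ℂ))⁻¹ • (P ⊗ₖ M) ^ n - ((n ! : ℂ))⁻¹ • (P ⊗ₖ (M ^ n)))
        = fun n : ℕ => if n = 0 then
            (1 - P ⊗ₖ (1 : Matrix (Fin q) (Fin q) ℂ)) else 0 := by
      funext n
      cases n with
      | zero => simp
      | succ n => simp [hpow n]
    rw [this, tsum_ite_eq]
  have h1k : ((1 : Matrix (Fin p) (Fin p) ℂ) - P) ⊗ₖ (1 : Matrix (Fin q) (Fin q) ℂ)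
      = 1 - P ⊗ₖ (1 : Matrix (Fin q) (Fin q) ℂ) := by
    have := add_kronecker ((1 : Matrix (Fin p) (Fin p) ℂ) - P) P (1 : Matrix (Fin q) (Fin q) ℂ)
    rw [sub_add_cancel, one_kronecker_one] at this
    rw [eq_sub_iff_add_eq, ← this]
  rw [h1k, ← key]
  abel

/-- exp of a sum of `P r ⊗ₖ N r` for pairwise orthogonal projections. -/
private lemma exp_sum_proj {m : ℕ} (P : Fin m → Matrix (Fin p) (Fin p) ℂ)
    (N : Fin m → Matrix (Fin q) (Fin q) ℂ)
    (hidem : ∀ r, P r * P r = P r)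
    (horth : ∀ r s, r ≠ s → P r * P s = 0) (s : Finset (Fin m)) :
    NormedSpace.exp (∑ r ∈ s, P r ⊗ₖ N r)
      = (1 - ∑ r ∈ s, P r) ⊗ₖ 1 + ∑ r ∈ s, P r ⊗ₖ NormedSpace.exp (N r) := by
  classical
  induction s using Finset.induction with
  | empty => simp [one_kronecker_one]
  | @insert a s ha ih =>
    have horth' : ∀ r ∈ s, P a * P r = 0 := fun r hr =>
      horth a r (fun h => ha (h ▸ hr))
    have horth'' : ∀ r ∈ s, P r * P a = 0 := fun r hr =>
      horth r a (fun h => ha (h ▸ hr))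
    rw [Finset.sum_insert ha]
    have hcomm : Commute (P a ⊗ₖ N a) (∑ r ∈ s, P r ⊗ₖ N r) := by
      unfold Commute SemiconjBy
      rw [kron_mul_sum_eq_zero P horth', sum_mul_kron_eq_zero P horth'']
    rw [Matrix.exp_add_of_commute _ _ hcomm, ih,
      exp_proj_kron (P a) (hidem a) (N a)]
    -- expand the product
    have e1 : ((1 : Matrix (Fin p) (Fin p) ℂ) - P a) ⊗ₖ (1 : Matrix (Fin q) (Fin q) ℂ)
        = 1 - P a ⊗ₖ (1 : Matrix (Fin q) (Fin q) ℂ) := by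
      have := add_kronecker ((1 : Matrix (Fin p) (Fin p) ℂ) - P a) (P a)
        (1 : Matrix (Fin q) (Fin q) ℂ)
      rw [sub_add_cancel, one_kronecker_one] at this
      rw [eq_sub_iff_add_eq, ← this]
    have e2 : ((1 : Matrix (Fin p) (Fin p) ℂ) - ∑ r ∈ s, P r) ⊗ₖ (1 : Matrix (Fin q) (Fin q) ℂ)
        = 1 - (∑ r ∈ s, P r) ⊗ₖ (1 : Matrix (Fin q) (Fin q) ℂ) := by
      have := add_kronecker ((1 : Matrix (Fin p) (Fin p) ℂ) - ∑ r ∈ s, P r) (∑ r ∈ s, P r)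
        (1 : Matrix (Fin q) (Fin q) ℂ)
      rw [sub_add_cancel, one_kronecker_one] at this
      rw [eq_sub_iff_add_eq, ← this]
    have e3 : ((1 : Matrix (Fin p) (Fin p) ℂ) - (P a + ∑ r ∈ s, P r)) ⊗ₖ
          (1 : Matrix (Fin q) (Fin q) ℂ)
        = 1 - (P a ⊗ₖ (1 : Matrix (Fin q) (Fin q) ℂ)
            + (∑ r ∈ s, P r) ⊗ₖ (1 : Matrix (Fin q) (Fin q) ℂ)) := by
      have := add_kronecker ((1 : Matrix (Fin p) (Fin p) ℂ) - (P a + ∑ r ∈ s, P r))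
        (P a + ∑ r ∈ s, P r) (1 : Matrix (Fin q) (Fin q) ℂ)
      rw [sub_add_cancel, one_kronecker_one, add_kronecker] at this
      rw [eq_sub_iff_add_eq, ← this]
    set u := P a ⊗ₖ (1 : Matrix (Fin q) (Fin q) ℂ) with hu
    set v := (∑ r ∈ s, P r) ⊗ₖ (1 : Matrix (Fin q) (Fin q) ℂ) with hv
    set X := P a ⊗ₖ NormedSpace.exp (N a) with hX
    set Y := ∑ r ∈ s, P r ⊗ₖ NormedSpace.exp (N r) with hY
    rw [Finset.sum_insert ha, Finset.sum_insert ha, e1, e2, e3]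
    have huv : u * v = 0 := by
      rw [hu, hv, ← mul_kronecker_mul, Finset.mul_sum]
      rw [Finset.sum_eq_zero horth']
      simp
    have huY : u * Y = 0 := kron_mul_sum_eq_zero P horth' _ _
    have hXv : X * v = 0 := by
      rw [hX, hv, ← mul_kronecker_mul, Finset.mul_sum]
      rw [Finset.sum_eq_zero horth']
      simp
    have hXY : X * Y = 0 := kron_mul_sum_eq_zero P horth' _ _
    have expand : (1 - u + X) * (1 - v + Y) = 1 - (u + v) + (X + Y) := by
      have : (1 - u + X) * (1 - v + Y)
          = 1 - v + Y - (u * 1 - u * v + u * Y) + (X * 1 - X * v + X * Y) := by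
        noncomm_ring
      rw [this, huv, huY, hXv, hXY]
      noncomm_ring
    exact expand

end Aux

/-- If `A = Σ_r θ_r E_r` is the spectral decomposition of a real symmetric matrix `A` and
`B` is real symmetric, then `exp(it(A⊗B)) = Σ_r E_r ⊗ exp(iθ_r t B)`. -/
theorem exp_direct_product {p q : ℕ}
    (A : Matrix (Fin p) (Fin p) ℝ) (B : Matrix (Fin q) (Fin q) ℝ)
    (hA : A.IsSymm) (hB : B.IsSymm)
    {m : ℕ} (θ : Fin m → ℝ) (E : Fin m → Matrix (Fin p) (Fin p) ℝ)
    (hθ : Function.Injective θ)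
    (hsym : ∀ r, (E r)ᵀ = E r)
    (hidem : ∀ r, E r * E r = E r)
    (horth : ∀ r s, r ≠ s → E r * E s = 0)
    (hsum : ∑ r, E r = 1)
    (hdecomp : A = ∑ r, θ r • E r) (t : ℝ) :
    NormedSpace.exp ((Complex.I * t) • (A.map Complex.ofReal ⊗ₖ B.map Complex.ofReal))
      = ∑ r, (E r).map Complex.ofReal
          ⊗ₖ NormedSpace.exp ((Complex.I * (θ r * t)) • B.map Complex.ofReal) := by
  classical
  set P : Fin m → Matrix (Fin p) (Fin p) ℂ := fun r => (E r).map Complex.ofReal with hP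
  set N : Fin m → Matrix (Fin q) (Fin q) ℂ :=
    fun r => (Complex.I * (θ r * t)) • B.map Complex.ofReal with hN
  have hPidem : ∀ r, P r * P r = P r := by
    intro r
    simp only [hP]
    have : ∀ (X Y : Matrix (Fin p) (Fin p) ℝ), (X * Y).map Complex.ofReal
        = X.map Complex.ofReal * Y.map Complex.ofReal := by
      intro X Y
      ext i j
      simp [Matrix.mul_apply]
    rw [← this, hidem r]
  have hPorth : ∀ r s, r ≠ s → P r * P s = 0 := by
    intro r s hrs
    simp only [hP]
    have : ∀ (X Y : Matrix (Fin p) (Fin p) ℝ), (X * Y).map Complex.ofReal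
        = X.map Complex.ofReal * Y.map Complex.ofReal := by
      intro X Y
      ext i j
      simp [Matrix.mul_apply]
    rw [← this, horth r s hrs]
    ext i j
    simp
  have hPsum : ∑ r, P r = 1 := by
    simp only [hP]
    have h1 : (∑ r, E r).map Complex.ofReal = ∑ r, (E r).map Complex.ofReal := by
      ext i j
      simp [Matrix.map_apply, Matrix.sum_apply]
    rw [← h1, hsum]
    ext i j
    simp [Matrix.one_apply, apply_ite]
  have harg : (Complex.I * t) • (A.map Complex.ofReal ⊗ₖ B.map Complex.ofReal)
      = ∑ r, P r ⊗ₖ N r := by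
    have hAmap : A.map Complex.ofReal = ∑ r, (θ r : ℂ) • P r := by
      rw [hdecomp]
      ext i j
      simp [Matrix.map_apply, Matrix.sum_apply, Matrix.smul_apply, hP]
    rw [hAmap, sum_kron, Finset.smul_sum]
    refine Finset.sum_congr rfl fun r _ => ?_
    rw [smul_kronecker, ← kronecker_smul, ← kronecker_smul, smul_smul, hN,
      show Complex.I * (t : ℂ) * (θ r : ℂ) = Complex.I * ((θ r : ℂ) * (t : ℂ)) by ring]
  rw [harg, exp_sum_proj P N hPidem hPorth, hPsum]
  simp [hN]
  rfl
end
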